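/- For every nonnegative integer n and nonzero x, the Legendre polynomial satisfies P_n(x) = x^n \sum_{k=0}^{\lfloor n/2 \rfloor} \binom{n}{2k} \binom{-1/2}{k} (1/x^2 - 1)^k. -/

import Mathlib

open Polynomial Finset

/-- The Legendre polynomials over `ℚ`, defined by the three-term recurrence
`P₀ = 1`, `P₁ = X`, `(n+2)·P_{n+2} = (2n+3)·X·P_{n+1} - (n+1)·P_n`. -/
noncomputable def legendreP : ℕ → Polynomial ℚ
  | 0 => 1
  | 1 => X
  | n + 2 => C ((n + 2 : ℚ))⁻¹ *
      (C (2 * (n : ℚ) + 3) * X * legendreP (n + 1) - C ((n : ℚ) + 1) * legendreP n)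

/-- The generalized binomial coefficient `a(a-1)⋯(a-k+1)/k!`. -/
def gchoose (a : ℚ) (k : ℕ) : ℚ :=
  (∏ i ∈ Finset.range k, (a - i)) / (Nat.factorial k)

def F (n : ℕ) (x : ℚ) : ℚ :=
  x ^ n * ∑ k ∈ Finset.range (n / 2 + 1),
    (n.choose (2 * k) : ℚ) * gchoose (-1/2) k * (1 / x ^ 2 - 1) ^ k

lemma gchoose_zero (a : ℚ) : gchoose a 0 = 1 := by simp [gchoose]

lemma gchoose_succ (a : ℚ) (k : ℕ) :
    gchoose a (k+1) * ((k:ℚ)+1) = gchoose a k * (a - k) := by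
  unfold gchoose
  rw [Finset.prod_range_succ, Nat.factorial_succ]
  have hk : ((Nat.factorial k : ℚ)) ≠ 0 := Nat.cast_ne_zero.mpr (Nat.factorial_ne_zero k)
  have hk1 : ((k:ℚ)+1) ≠ 0 := by positivity
  push_cast
  field_simp

lemma choose_shift (n k : ℕ) :
    (2*(k:ℚ)+1) * (n.choose (2*k+1) : ℚ) = ((n:ℚ) - 2*k) * (n.choose (2*k) : ℚ) := by
  by_cases h : 2*k ≤ n
  · have := Nat.choose_succ_right_eq n (2*k)
    have := congrArg (fun m : ℕ => (m : ℚ)) this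
    push_cast [Nat.cast_sub h] at this
    linarith [this]
  · have h1 : n < 2*k := by omega
    have h2 : n < 2*k+1 := by omega
    simp [Nat.choose_eq_zero_of_lt h1, Nat.choose_eq_zero_of_lt h2]

lemma brack (n k : ℕ) :
    (((n:ℚ)+2) * ((n+2).choose (2*(k+1)) : ℚ)
      - (2*(n:ℚ)+3) * ((n+1).choose (2*(k+1)) : ℚ)
      + ((n:ℚ)+1) * ((n.choose (2*(k+1)) : ℚ))) * gchoose (-1/2) (k+1)
      = -(((n:ℚ)+1) * (n.choose (2*k) : ℚ) * gchoose (-1/2) k) := by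
  have e1 : (n+2).choose (2*(k+1)) =
      n.choose (2*k+2) + 2 * n.choose (2*k+1) + n.choose (2*k) := by
    show (n+1+1).choose (2*k+1+1) = _
    rw [Nat.choose_succ_succ (n+1) (2*k+1), Nat.choose_succ_succ n (2*k),
      show (2*k+1+1) = 2*k+1+1 from rfl, Nat.choose_succ_succ n (2*k+1)]
    ring
  have e2 : (n+1).choose (2*(k+1)) = n.choose (2*k+1) + n.choose (2*k+2) := by
    show (n+1).choose (2*k+1+1) = _
    rw [Nat.choose_succ_succ n (2*k+1)]
  have e3 : 2*(k+1) = 2*k+2 := by ring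
  rw [e1, e2, e3]
  have hg := gchoose_succ (-1/2) k
  have hc := choose_shift n k
  have h2k : (2*(k:ℚ)+1) ≠ 0 := by positivity
  apply mul_left_cancel₀ h2k
  push_cast
  linear_combination (2*((n:ℚ)+1)*(n.choose (2*k) : ℚ)) * hg
    + gchoose (-1/2) (k+1) * hc

lemma sum_rec (n : ℕ) (y : ℚ) :
    ∑ k ∈ Finset.range (n/2+2),
      ((((n:ℚ)+2) * ((n+2).choose (2*k) : ℚ)
        - (2*(n:ℚ)+3) * ((n+1).choose (2*k) : ℚ)
        + ((n:ℚ)+1) * (n.choose (2*k) : ℚ)) * gchoose (-1/2) k) * y^k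
    = -(((n:ℚ)+1)) * ∑ k ∈ Finset.range (n/2+2),
        (n.choose (2*k) : ℚ) * gchoose (-1/2) k * y^(k+1) := by
  have hR : (∑ k ∈ Finset.range (n/2+2),
      (n.choose (2*k) : ℚ) * gchoose (-1/2) k * y^(k+1))
      = ∑ k ∈ Finset.range (n/2+1),
      (n.choose (2*k) : ℚ) * gchoose (-1/2) k * y^(k+1) := by
    rw [Finset.sum_range_succ]
    have : n < 2*(n/2+1) := by omega
    simp [Nat.choose_eq_zero_of_lt this]
  rw [hR, Finset.sum_range_succ', Finset.mul_sum]
  have h0 : ((((n:ℚ)+2) * ((n+2).choose (2*0) : ℚ)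
        - (2*(n:ℚ)+3) * ((n+1).choose (2*0) : ℚ)
        + ((n:ℚ)+1) * (n.choose (2*0) : ℚ)) * gchoose (-1/2) 0) * y^0 = 0 := by
    simp [gchoose_zero]; ring
  rw [h0, add_zero]
  refine Finset.sum_congr rfl (fun k _ => ?_)
  have hb := brack n k
  linear_combination y^(k+1) * hb

lemma ext_sum (m N : ℕ) (h : m/2+1 ≤ N) (y : ℚ) :
    (∑ k ∈ Finset.range (m/2+1), (m.choose (2*k) : ℚ) * gchoose (-1/2) k * y^k)
    = ∑ k ∈ Finset.range N, (m.choose (2*k) : ℚ) * gchoose (-1/2) k * y^k := by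
  apply Finset.sum_subset (Finset.range_subset_range.mpr h)
  intro k _ hk
  have hk' : m/2+1 ≤ k := by simpa [Finset.mem_range, not_lt] using hk
  have : m < 2*k := by omega
  simp [Nat.choose_eq_zero_of_lt this]

lemma Frec (n : ℕ) (x : ℚ) (hx : x ≠ 0) :
    ((n:ℚ)+2) * F (n+2) x = (2*(n:ℚ)+3) * x * F (n+1) x - ((n:ℚ)+1) * F n x := by
  unfold F
  set y : ℚ := 1 / x ^ 2 - 1 with hy
  have hN2 : (n+2)/2+1 = n/2+2 := by omega
  have hN1 : (n+1)/2+1 ≤ n/2+2 := by omega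
  have hN0 : n/2+1 ≤ n/2+2 := by omega
  rw [hN2, ext_sum (n+1) (n/2+2) hN1 y, ext_sum n (n/2+2) hN0 y]
  set S2 : ℚ := ∑ k ∈ Finset.range (n/2+2), ((n+2).choose (2*k) : ℚ) * gchoose (-1/2) k * y^k with hS2
  set S1 : ℚ := ∑ k ∈ Finset.range (n/2+2), ((n+1).choose (2*k) : ℚ) * gchoose (-1/2) k * y^k with hS1
  set S0 : ℚ := ∑ k ∈ Finset.range (n/2+2), (n.choose (2*k) : ℚ) * gchoose (-1/2) k * y^k with hS0
  set Cv : ℚ := ∑ k ∈ Finset.range (n/2+2), (n.choose (2*k) : ℚ) * gchoose (-1/2) k * y^(k+1) with hCv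
  have key : (∑ k ∈ Finset.range (n/2+2),
      ((((n:ℚ)+2) * ((n+2).choose (2*k) : ℚ)
        - (2*(n:ℚ)+3) * ((n+1).choose (2*k) : ℚ)
        + ((n:ℚ)+1) * (n.choose (2*k) : ℚ)) * gchoose (-1/2) k) * y^k)
      = -(((n:ℚ)+1)) * Cv := sum_rec n y
  have comb : ((n:ℚ)+2) * S2 - (2*(n:ℚ)+3) * S1 + ((n:ℚ)+1) * S0
      = ∑ k ∈ Finset.range (n/2+2),
      ((((n:ℚ)+2) * ((n+2).choose (2*k) : ℚ)
        - (2*(n:ℚ)+3) * ((n+1).choose (2*k) : ℚ)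
        + ((n:ℚ)+1) * (n.choose (2*k) : ℚ)) * gchoose (-1/2) k) * y^k := by
    rw [hS2, hS1, hS0, Finset.mul_sum, Finset.mul_sum, Finset.mul_sum,
      ← Finset.sum_sub_distrib, ← Finset.sum_add_distrib]
    exact Finset.sum_congr rfl (fun k _ => by ring)
  have hshift : y * S0 = Cv := by
    rw [hS0, hCv, Finset.mul_sum]
    exact Finset.sum_congr rfl (fun k _ => by ring)
  have hxn : x ^ n = x ^ (n+2) * (y+1) := by
    rw [hy]
    field_simp
    ring
  linear_combination x^(n+2) * comb + x^(n+2) * key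
    + (((n:ℚ)+1) * x^(n+2)) * hshift + (((n:ℚ)+1) * S0) * hxn

theorem legendre_sum_formula (n : ℕ) (x : ℚ) (hx : x ≠ 0) :
    (legendreP n).eval x =
      x ^ n * ∑ k ∈ Finset.range (n / 2 + 1),
        (n.choose (2 * k) : ℚ) * gchoose (-1/2) k * (1 / x ^ 2 - 1) ^ k := by
  show (legendreP n).eval x = F n x
  have key : ∀ m, (legendreP m).eval x = F m x ∧ (legendreP (m+1)).eval x = F (m+1) x := by
    intro m
    induction m with
    | zero =>
      constructor
      · simp [legendreP, F, gchoose_zero]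
      · simp [legendreP, F, gchoose_zero]
    | succ m ih =>
      refine ⟨ih.2, ?_⟩
      have h := Frec m x hx
      show (legendreP (m+2)).eval x = F (m+2) x
      rw [legendreP]
      simp only [eval_mul, eval_sub, eval_C, eval_X]
      rw [ih.1, ih.2]
      have hm : ((m:ℚ)+2) ≠ 0 := by positivity
      field_simp
      linear_combination -h
  exact (key n).1
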